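/- Let n ≥ 2 be a natural number, s > 0 a real number, and ε ∈ {−1, 0, 1}. Define φ(c) = −n(s−2ε)c^{2n+6} + (4ε(n+1) − n(n+1)s)c^{2n+4} − ((6n+4)ε − n²s)c^{2n+2} − ((6n+4)ε + n²s)c⁴ + (4ε(n+1) + n(n+1)s)c² + n(s+2ε). Then there exists a real number c > 1 with φ(c) = 0 if and only if ε = 1 and s < 2. -/

import Mathlib

lemma aux_f_neg (N c y : ℝ) (hN : 2 ≤ N) (hc : 1 < c) (hy : c^4 ≤ y) :
    -(y*c^4) - (N+1)*(y*c^2) + N*y - N*c^4 + (N+1)*c^2 + 1 < 0 := by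
  have hc2 : 1 < c ^ 2 := by nlinarith
  have hc4 : c ^ 2 ≤ c ^ 4 := by nlinarith
  nlinarith [mul_nonneg (mul_nonneg (by linarith : (0:ℝ) ≤ N+1) (by linarith : (0:ℝ) ≤ c^2-1)) (by nlinarith : (0:ℝ) ≤ y + c^2), mul_pos (by nlinarith : (0:ℝ) < y) (by nlinarith : (0:ℝ) < c^4)]

lemma aux_Q_pos (N c y : ℝ) (hN : 2 ≤ N) (hc : 1 < c) (hy : c^4 ≤ y) :
    2*N*(y*c^4) + 4*(N+1)*(y*c^2) - (6*N+4)*y - (6*N+4)*c^4 + 4*(N+1)*c^2 + 2*N > 0 := by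
  have hc2 : 1 < c ^ 2 := by nlinarith
  have hc4 : c ^ 2 ≤ c ^ 4 := by nlinarith
  nlinarith [mul_nonneg (mul_nonneg (by linarith : (0:ℝ) ≤ N) (by nlinarith : (0:ℝ) ≤ y-1)) (by nlinarith : (0:ℝ) ≤ c^4-1),
    mul_nonneg (mul_nonneg (by linarith : (0:ℝ) ≤ N+1) (by nlinarith : (0:ℝ) ≤ y-c^2)) (by linarith : (0:ℝ) ≤ c^2-1),
    mul_pos (by nlinarith : (0:ℝ) < y-1) (by nlinarith : (0:ℝ) < c^4-1)]

lemma aux_h_neg (N c y : ℝ) (hN : 2 ≤ N) (hc : 1 < c) (hy : c^4 ≤ y) :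
    2*N*(-(y*c^4) - (N+1)*(y*c^2) + N*y - N*c^4 + (N+1)*c^2 + 1)
      + (2*N*(y*c^4) + 4*(N+1)*(y*c^2) - (6*N+4)*y - (6*N+4)*c^4 + 4*(N+1)*c^2 + 2*N) < 0 := by
  have hc2 : 1 < c ^ 2 := by nlinarith
  have hc4 : c ^ 2 ≤ c ^ 4 := by nlinarith
  nlinarith [mul_nonneg (mul_nonneg (mul_nonneg (by linarith : (0:ℝ) ≤ N+1) (by linarith : (0:ℝ) ≤ N-2)) (by nlinarith : (0:ℝ) ≤ y)) (by linarith : (0:ℝ) ≤ c^2-1),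
    mul_nonneg (mul_nonneg (mul_nonneg (by linarith : (0:ℝ) ≤ N+1) (by linarith : (0:ℝ) ≤ N+2)) (by nlinarith : (0:ℝ) ≤ c^2)) (by linarith : (0:ℝ) ≤ c^2-1),
    mul_pos (by linarith : (0:ℝ) < N) (by nlinarith : (0:ℝ) < y-1)]

lemma aux_big (N s c y : ℝ) (hN : 2 ≤ N) (hs : 0 < s) (hs2 : s < 2) (hc : 1 < c)
    (hy : c^4 ≤ y) (hKc : 4*N^2+18*N+12 < N*(2-s)*c^2) :
    0 < N*(2-s)*(y*c^4) + (4*(N+1)-N*(N+1)*s)*(y*c^2) - ((6*N+4)-N^2*s)*y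
      - ((6*N+4)+N^2*s)*c^4 + (4*(N+1)+N*(N+1)*s)*c^2 + N*(s+2) := by
  have hc2 : 1 < c ^ 2 := by nlinarith
  have hc4 : c ^ 2 ≤ c ^ 4 := by nlinarith
  have hy0 : 0 < y := by nlinarith
  have hyc2 : 0 < y * c^2 := by positivity
  have h1 : y ≤ y * c^2 := by nlinarith
  have h2 : c^4 ≤ y * c^2 := by nlinarith
  nlinarith [mul_pos (sub_pos.mpr hKc) hyc2,
    mul_nonneg (mul_nonneg (by nlinarith : (0:ℝ) ≤ N*(N+1)) (by linarith : (0:ℝ) ≤ 2-s)) hyc2.le,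
    mul_nonneg (by linarith : (0:ℝ) ≤ 6*N+4) (by linarith : (0:ℝ) ≤ y*c^2 - y),
    mul_nonneg (by nlinarith : (0:ℝ) ≤ 6*N+4+2*N^2) (by linarith : (0:ℝ) ≤ y*c^2 - c^4),
    mul_nonneg (mul_nonneg (by nlinarith : (0:ℝ) ≤ N^2) (by linarith : (0:ℝ) ≤ 2-s)) (by positivity : (0:ℝ) ≤ c^4),
    mul_nonneg (mul_nonneg (by nlinarith : (0:ℝ) ≤ N*(N+1)) hs.le) (by positivity : (0:ℝ) ≤ c^2)]

/-- Section 7 (case A = 0): `φ` has a root `c > 1` iff `ε = 1` and `s < 2`. -/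
theorem stmt_13 (n : ℕ) (hn : 2 ≤ n) (s : ℝ) (hs : 0 < s) (ε : ℝ)
    (hε : ε ∈ ({-1, 0, 1} : Set ℝ)) (φ : ℝ → ℝ)
    (hφ : ∀ c : ℝ, φ c =
      -((n : ℝ) * (s - 2 * ε)) * c ^ (2 * n + 6)
        + (4 * ε * ((n : ℝ) + 1) - (n : ℝ) * ((n : ℝ) + 1) * s) * c ^ (2 * n + 4)
        - ((6 * (n : ℝ) + 4) * ε - (n : ℝ) ^ 2 * s) * c ^ (2 * n + 2)
        - ((6 * (n : ℝ) + 4) * ε + (n : ℝ) ^ 2 * s) * c ^ 4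
        + (4 * ε * ((n : ℝ) + 1) + (n : ℝ) * ((n : ℝ) + 1) * s) * c ^ 2
        + (n : ℝ) * (s + 2 * ε)) :
    (∃ c : ℝ, 1 < c ∧ φ c = 0) ↔ (ε = 1 ∧ s < 2) := by
  have hN : (2:ℝ) ≤ (n:ℝ) := by exact_mod_cast hn
  have hn0 : (0:ℝ) < (n:ℝ) := by linarith
  constructor
  · rintro ⟨c, hc, h0⟩
    have e6 : c ^ (2*n+6) = c ^ (2*n+2) * c ^ 4 := by
      rw [show 2*n+6 = 2*n+2+4 from by omega, pow_add]
    have e4 : c ^ (2*n+4) = c ^ (2*n+2) * c ^ 2 := by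
      rw [show 2*n+4 = 2*n+2+2 from by omega, pow_add]
    rw [hφ c, e6, e4] at h0
    set y := c ^ (2*n+2) with hydef
    have hy : c ^ 4 ≤ y := by
      rw [hydef]
      exact pow_le_pow_right₀ hc.le (by omega)
    have hf := aux_f_neg (n:ℝ) c y hN hc hy
    have hQ := aux_Q_pos (n:ℝ) c y hN hc hy
    have hnf : (n:ℝ) * (-(y*c^4) - ((n:ℝ)+1)*(y*c^2) + (n:ℝ)*y - (n:ℝ)*c^4 + ((n:ℝ)+1)*c^2 + 1) < 0 :=
      mul_neg_of_pos_of_neg hn0 hf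
    have hsf : s * ((n:ℝ) * (-(y*c^4) - ((n:ℝ)+1)*(y*c^2) + (n:ℝ)*y - (n:ℝ)*c^4 + ((n:ℝ)+1)*c^2 + 1)) < 0 :=
      mul_neg_of_pos_of_neg hs hnf
    simp only [Set.mem_insert_iff, Set.mem_singleton_iff] at hε
    rcases hε with rfl | rfl | rfl
    · exfalso
      have key : s * ((n:ℝ) * (-(y*c^4) - ((n:ℝ)+1)*(y*c^2) + (n:ℝ)*y - (n:ℝ)*c^4 + ((n:ℝ)+1)*c^2 + 1))
          - (2*(n:ℝ)*(y*c^4) + 4*((n:ℝ)+1)*(y*c^2) - (6*(n:ℝ)+4)*y - (6*(n:ℝ)+4)*c^4 + 4*((n:ℝ)+1)*c^2 + 2*(n:ℝ)) = 0 := by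
        linear_combination h0
      linarith
    · exfalso
      have key : s * ((n:ℝ) * (-(y*c^4) - ((n:ℝ)+1)*(y*c^2) + (n:ℝ)*y - (n:ℝ)*c^4 + ((n:ℝ)+1)*c^2 + 1)) = 0 := by
        linear_combination h0
      linarith
    · refine ⟨rfl, ?_⟩
      by_contra hcon
      push_neg at hcon
      have hh := aux_h_neg (n:ℝ) c y hN hc hy
      have key : s * ((n:ℝ) * (-(y*c^4) - ((n:ℝ)+1)*(y*c^2) + (n:ℝ)*y - (n:ℝ)*c^4 + ((n:ℝ)+1)*c^2 + 1))
          + (2*(n:ℝ)*(y*c^4) + 4*((n:ℝ)+1)*(y*c^2) - (6*(n:ℝ)+4)*y - (6*(n:ℝ)+4)*c^4 + 4*((n:ℝ)+1)*c^2 + 2*(n:ℝ)) = 0 := by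
        linear_combination h0
      have hle : (s-2) * ((n:ℝ) * (-(y*c^4) - ((n:ℝ)+1)*(y*c^2) + (n:ℝ)*y - (n:ℝ)*c^4 + ((n:ℝ)+1)*c^2 + 1)) ≤ 0 :=
        mul_nonpos_of_nonneg_of_nonpos (by linarith) hnf.le
      nlinarith [hh, key, hle]
  · rintro ⟨rfl, hs2⟩
    have hφfun : φ = fun c : ℝ =>
      -((n : ℝ) * (s - 2 * 1)) * c ^ (2 * n + 6)
        + (4 * 1 * ((n : ℝ) + 1) - (n : ℝ) * ((n : ℝ) + 1) * s) * c ^ (2 * n + 4)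
        - ((6 * (n : ℝ) + 4) * 1 - (n : ℝ) ^ 2 * s) * c ^ (2 * n + 2)
        - ((6 * (n : ℝ) + 4) * 1 + (n : ℝ) ^ 2 * s) * c ^ 4
        + (4 * 1 * ((n : ℝ) + 1) + (n : ℝ) * ((n : ℝ) + 1) * s) * c ^ 2
        + (n : ℝ) * (s + 2 * 1) := funext hφ
    have hφ1 : φ 1 = 0 := by rw [hφ 1]; simp only [one_pow]; ring
    -- derivative at 1
    have H2 := (((((hasDerivAt_pow (2*n+6) (1:ℝ)).const_mul (-((n:ℝ) * (s - 2 * 1)))).add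
        ((hasDerivAt_pow (2*n+4) (1:ℝ)).const_mul (4 * 1 * ((n:ℝ) + 1) - (n:ℝ) * ((n:ℝ) + 1) * s))).sub
        ((hasDerivAt_pow (2*n+2) (1:ℝ)).const_mul ((6 * (n:ℝ) + 4) * 1 - (n:ℝ) ^ 2 * s))).sub
        ((hasDerivAt_pow 4 (1:ℝ)).const_mul ((6 * (n:ℝ) + 4) * 1 + (n:ℝ) ^ 2 * s))).add
        ((hasDerivAt_pow 2 (1:ℝ)).const_mul (4 * 1 * ((n:ℝ) + 1) + (n:ℝ) * ((n:ℝ) + 1) * s))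
    have H3 := H2.add_const ((n:ℝ) * (s + 2 * 1))
    have H : HasDerivAt φ (-8 * (n:ℝ) * ((n:ℝ)+1) * s) 1 := by
      rw [hφfun]
      convert H3 using 1
      · rfl
      · rfl
      · rfl
      simp only [one_pow]
      push_cast
      ring
    have Dneg : (-8 * (n:ℝ) * ((n:ℝ)+1) * s) < 0 := by
      nlinarith [mul_pos (mul_pos hn0 (show (0:ℝ) < (n:ℝ)+1 by linarith)) hs]
    have Hs := hasDerivAt_iff_tendsto_slope.mp H
    have hev : ∀ᶠ x in nhdsWithin (1:ℝ) (Set.Ioi 1), slope φ 1 x < 0 := by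
      refine Filter.Eventually.filter_mono ?_ (Hs.eventually_lt_const Dneg)
      exact nhdsWithin_mono 1 fun x hx => ne_of_gt hx
    obtain ⟨c₁, hsl, hc₁⟩ := (hev.and eventually_mem_nhdsWithin).exists
    have hc₁1 : (1:ℝ) < c₁ := hc₁
    have hφc₁ : φ c₁ < 0 := by
      rw [slope_def_field, hφ1, sub_zero, div_neg_iff] at hsl
      rcases hsl with ⟨h1, h2⟩ | ⟨h1, h2⟩
      · linarith
      · exact h1
    -- large c
    have hK : 0 < (n:ℝ) * (2 - s) := by apply mul_pos hn0; linarith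
    set c₂ : ℝ := max c₁ ((4*(n:ℝ)^2 + 18*(n:ℝ) + 12) / ((n:ℝ) * (2 - s)) + 2) with hc₂def
    have hc₂c₁ : c₁ ≤ c₂ := le_max_left _ _
    have hc₂M : (4*(n:ℝ)^2 + 18*(n:ℝ) + 12) / ((n:ℝ) * (2 - s)) + 2 ≤ c₂ := le_max_right _ _
    have hc₂1 : (1:ℝ) < c₂ := lt_of_lt_of_le hc₁1 hc₂c₁
    have hMK : 4*(n:ℝ)^2 + 18*(n:ℝ) + 12 < ((n:ℝ) * (2 - s)) * c₂ := by
      have hlt : (4*(n:ℝ)^2 + 18*(n:ℝ) + 12) / ((n:ℝ) * (2 - s)) < c₂ := by linarith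
      have := (div_lt_iff₀ hK).mp hlt
      linarith
    have hKc : 4*(n:ℝ)^2 + 18*(n:ℝ) + 12 < ((n:ℝ) * (2 - s)) * c₂^2 := by nlinarith
    have hy2 : c₂ ^ 4 ≤ c₂ ^ (2*n+2) := pow_le_pow_right₀ hc₂1.le (by omega)
    have hbig := aux_big (n:ℝ) s c₂ (c₂ ^ (2*n+2)) hN hs hs2 hc₂1 hy2 (by linarith)
    have hφc₂ : 0 < φ c₂ := by
      have e6 : c₂ ^ (2*n+6) = c₂ ^ (2*n+2) * c₂ ^ 4 := by
        rw [show 2*n+6 = 2*n+2+4 from by omega, pow_add]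
      have e4 : c₂ ^ (2*n+4) = c₂ ^ (2*n+2) * c₂ ^ 2 := by
        rw [show 2*n+4 = 2*n+2+2 from by omega, pow_add]
      rw [hφ c₂, e6, e4]
      linarith [hbig]
    have hcont : Continuous φ := by rw [hφfun]; fun_prop
    have hmem : (0:ℝ) ∈ Set.Icc (φ c₁) (φ c₂) := ⟨hφc₁.le, hφc₂.le⟩
    obtain ⟨c, hcmem, hceq⟩ := intermediate_value_Icc hc₂c₁ hcont.continuousOn hmem
    exact ⟨c, lt_of_lt_of_le hc₁1 hcmem.1, hceq⟩
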